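/- For p ≥ 2 and κ ≥ p/2, the Bessel ratio satisfies exp(-p/(2κ)) ≤ A_p(κ) ≤ exp(-α_0 (p-1)/(2κ)), where α_0 = -log(√2 - 1). -/

import Mathlib

open Real

/-- Modified Bessel function of the first kind, `I_v(κ)`. -/
noncomputable def besselI (v κ : ℝ) : ℝ :=
  ∑' q : ℕ, (1 / (q.factorial * Real.Gamma (q + v + 1))) * (κ / 2) ^ ((2 * q : ℝ) + v)

/-- The Bessel ratio `A_p(κ) = I_{p/2}(κ) / I_{p/2-1}(κ)`. -/
noncomputable def Ap (p : ℕ) (κ : ℝ) : ℝ :=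
  besselI (p / 2 : ℝ) κ / besselI ((p / 2 : ℝ) - 1) κ

open Finset

/-- coefficient of the Bessel series -/
noncomputable def bc (v : ℝ) (q : ℕ) : ℝ := 1 / (q.factorial * Real.Gamma (q + v + 1))

/-- closed form for the Cauchy-product coefficients -/
noncomputable def bW (a b : ℝ) (k : ℕ) : ℝ :=
  Real.Gamma (a + b + 2 * k + 1) /
    (k.factorial * Real.Gamma (a + k + 1) * Real.Gamma (b + k + 1) * Real.Gamma (a + b + k + 1))

lemma bc_pos {v : ℝ} (hv : 0 ≤ v) (q : ℕ) : 0 < bc v q := by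
  have h : (0:ℝ) < q + v + 1 := by positivity
  have := Real.Gamma_pos_of_pos h
  have hq : (0:ℝ) < q.factorial := by exact_mod_cast q.factorial_pos
  unfold bc; positivity

lemma bW_pos {a b : ℝ} (ha : 0 ≤ a) (hb : 0 ≤ b) (k : ℕ) : 0 < bW a b k := by
  have h1 : (0:ℝ) < a + b + 2 * k + 1 := by positivity
  have h2 : (0:ℝ) < a + k + 1 := by positivity
  have h3 : (0:ℝ) < b + k + 1 := by positivity
  have h4 : (0:ℝ) < a + b + k + 1 := by positivity
  have hq : (0:ℝ) < k.factorial := by exact_mod_cast k.factorial_pos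
  unfold bW
  exact div_pos (Real.Gamma_pos_of_pos h1) (by positivity)

lemma gamma_asc (n : ℕ) (y : ℝ) (hy : 0 < y) :
    Real.Gamma (y + n) = (ascPochhammer ℝ n).eval y * Real.Gamma y := by
  induction n with
  | zero => simp
  | succ n ih =>
      have h1 : y + (n+1:ℕ) = (y + n) + 1 := by push_cast; ring
      have h2 : y + (n:ℝ) ≠ 0 := by positivity
      rw [h1, Real.Gamma_add_one h2, ascPochhammer_succ_right]
      simp only [Polynomial.eval_mul, Polynomial.eval_add, Polynomial.eval_X,
        Polynomial.eval_natCast]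
      rw [ih]; ring

lemma ring_choose_eq (r : ℝ) (n : ℕ) (h : 0 < r - n + 1) :
    Ring.choose r n = Real.Gamma (r + 1) / (n.factorial * Real.Gamma (r - n + 1)) := by
  have h1 := Ring.descPochhammer_eq_factorial_smul_choose r n
  rw [Polynomial.descPochhammer_smeval_eq_ascPochhammer,
    Polynomial.ascPochhammer_smeval_eq_eval] at h1
  have h2 := gamma_asc n (r - n + 1) h
  have h3 : r - n + 1 + n = r + 1 := by ring
  rw [h3] at h2
  have hΓ : Real.Gamma (r - n + 1) ≠ 0 := ne_of_gt (Real.Gamma_pos_of_pos h)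
  have hn : (n.factorial : ℝ) ≠ 0 := by exact_mod_cast n.factorial_ne_zero
  have h4 : (ascPochhammer ℝ n).eval (r - n + 1) = Real.Gamma (r+1) / Real.Gamma (r - n + 1) := by
    field_simp [h2]
    linarith [h2]
  rw [h4, nsmul_eq_mul] at h1
  field_simp at h1 ⊢
  linarith [h1]

lemma vand {a b : ℝ} (ha : 0 ≤ a) (hb : 0 ≤ b) (k : ℕ) :
    ∑ i ∈ range (k + 1), bc a i * bc b (k - i) = bW a b k := by
  have key := Ring.add_choose_eq (R := ℝ) (r := b + (k:ℝ)) (s := a + (k:ℝ)) k (Commute.all _ _)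
  rw [Finset.Nat.sum_antidiagonal_eq_sum_range_succ_mk] at key
  have hkf : (0:ℝ) < k.factorial := by exact_mod_cast k.factorial_pos
  have hL : Ring.choose (b + (k:ℝ) + (a + (k:ℝ))) k
      = Real.Gamma (a + b + 2*k + 1) / (k.factorial * Real.Gamma (a + b + k + 1)) := by
    have h0 : (0:ℝ) < (b + k + (a + k)) - k + 1 := by
      have : (b + (k:ℝ) + (a + k)) - k + 1 = a + b + k + 1 := by ring
      rw [this]; positivity
    rw [ring_choose_eq _ _ h0]
    rw [show (b + (k:ℝ) + (a + k)) + 1 = a + b + 2*k + 1 by ring,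
       show (b + (k:ℝ) + (a + k)) - k + 1 = a + b + k + 1 by ring]
  have hT : ∀ i ∈ range (k+1),
      Ring.choose (b + (k:ℝ)) i * Ring.choose (a + (k:ℝ)) (k - i)
      = (Real.Gamma (a + k + 1) * Real.Gamma (b + k + 1)) * (bc a i * bc b (k - i)) := by
    intro i hi
    have hik : i ≤ k := by
      have := Finset.mem_range.mp hi; omega
    have hcast : ((k - i : ℕ) : ℝ) = (k:ℝ) - i := by
      push_cast [Nat.cast_sub hik]; ring
    have h1 : (0:ℝ) < (b + k) - i + 1 := by
      have hki : (i:ℝ) ≤ k := by exact_mod_cast hik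
      nlinarith
    have h2 : (0:ℝ) < (a + k) - (k - i : ℕ) + 1 := by
      rw [hcast]
      have hi0 : (0:ℝ) ≤ i := by positivity
      nlinarith
    rw [ring_choose_eq _ _ h1, ring_choose_eq _ _ h2]
    unfold bc
    rw [show (a + (k:ℝ)) - (k - i : ℕ) + 1 = (i:ℝ) + a + 1 by rw [hcast]; ring,
       show (b + (k:ℝ)) - (i:ℝ) + 1 = ((k - i : ℕ):ℝ) + b + 1 by rw [hcast]; ring,
       show (b + (k:ℝ)) + 1 = b + k + 1 by ring, show (a + (k:ℝ)) + 1 = a + k + 1 by ring]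
    have g1 : Real.Gamma ((i:ℝ) + a + 1) ≠ 0 := by
      have : (0:ℝ) < (i:ℝ) + a + 1 := by positivity
      exact ne_of_gt (Real.Gamma_pos_of_pos this)
    have g2 : Real.Gamma (((k - i : ℕ):ℝ) + b + 1) ≠ 0 := by
      have : (0:ℝ) < ((k - i : ℕ):ℝ) + b + 1 := by positivity
      exact ne_of_gt (Real.Gamma_pos_of_pos this)
    have f1 : ((i.factorial : ℝ)) ≠ 0 := by exact_mod_cast i.factorial_ne_zero
    have f2 : (((k-i).factorial : ℝ)) ≠ 0 := by exact_mod_cast (k-i).factorial_ne_zero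
    field_simp
  rw [Finset.sum_congr rfl hT, ← Finset.mul_sum, hL] at key
  have gA : Real.Gamma (a + k + 1) ≠ 0 := by
    have : (0:ℝ) < a + k + 1 := by positivity
    exact ne_of_gt (Real.Gamma_pos_of_pos this)
  have gB : Real.Gamma (b + k + 1) ≠ 0 := by
    have : (0:ℝ) < b + k + 1 := by positivity
    exact ne_of_gt (Real.Gamma_pos_of_pos this)
  have gC : Real.Gamma (a + b + k + 1) ≠ 0 := by
    have : (0:ℝ) < a + b + k + 1 := by positivity
    exact ne_of_gt (Real.Gamma_pos_of_pos this)
  unfold bW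
  rw [eq_div_iff (by positivity)]
  rw [eq_comm] at key
  rw [mul_comm] at key
  field_simp at key ⊢
  linarith [key]

/-- shifted coefficient: `sbW ν n` is the coefficient of `t^n` in `t * B²`. -/
noncomputable def sbW (ν : ℝ) : ℕ → ℝ
  | 0 => 0
  | (k+1) => bW ν ν k

lemma coeff_ineqs (ν : ℝ) (hν : 1 ≤ ν) (k : ℕ) :
    (2*ν - 1) * bW (ν-1) ν k + 2 * sbW ν k ≤ 2 * bW (ν-1) (ν-1) k ∧
    2 * bW (ν-1) (ν-1) k ≤ (2*ν - 1) * bW (ν-1) ν k + 2 * sbW ν k + ν * bW ν ν k := by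
  set K := (k:ℝ) with hK
  have hK0 : 0 ≤ K := by positivity
  have hνK : (0:ℝ) < ν + K := by linarith
  have h2ν1K : (0:ℝ) < 2*ν - 1 + K := by linarith
  have h2ν12K : (0:ℝ) < 2*ν - 1 + 2*K := by linarith
  have h2νK : (0:ℝ) < 2*ν + K := by linarith
  have hg1 : (0:ℝ) < Real.Gamma (ν + K) := Real.Gamma_pos_of_pos (by linarith)
  have hg2 : (0:ℝ) < Real.Gamma (2*ν - 1 + K) := Real.Gamma_pos_of_pos h2ν1K
  have hG2 : (0:ℝ) < Real.Gamma (2*ν - 1 + 2*K) := Real.Gamma_pos_of_pos h2ν12K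
  set g1 := Real.Gamma (ν + K)
  set g2 := Real.Gamma (2*ν - 1 + K)
  set G2 := Real.Gamma (2*ν - 1 + 2*K)
  have hkf : (0:ℝ) < k.factorial := by exact_mod_cast k.factorial_pos
  set D := G2 / (k.factorial * g1^2 * ((2*ν - 1 + K) * g2)) with hD
  have hDpos : 0 < D := by apply div_pos hG2; positivity
  have E1 : bW (ν-1) (ν-1) k = (2*ν - 1 + K) * D := by
    unfold bW
    rw [show ν-1 + (ν-1) + 2*K + 1 = 2*ν - 1 + 2*K by ring,
       show ν-1 + K + 1 = ν + K by ring,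
       show ν-1 + (ν-1) + K + 1 = 2*ν - 1 + K by ring]
    rw [hD]; field_simp; ring
  have E2 : bW (ν-1) ν k = ((2*ν - 1 + 2*K)/(ν + K)) * D := by
    unfold bW
    rw [show ν-1 + ν + 2*K + 1 = (2*ν - 1 + 2*K) + 1 by ring,
       Real.Gamma_add_one (ne_of_gt h2ν12K),
       show ν-1 + K + 1 = ν + K by ring,
       show ν + K + 1 = (ν + K) + 1 by ring,
       Real.Gamma_add_one (ne_of_gt hνK),
       show ν-1 + ν + K + 1 = (2*ν - 1 + K) + 1 by ring,
       Real.Gamma_add_one (ne_of_gt h2ν1K)]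
    rw [hD]; field_simp; ring
  have E3 : bW ν ν k = (2*(2*ν - 1 + 2*K)/((ν + K)*(2*ν + K))) * D := by
    unfold bW
    rw [show ν + ν + 2*K + 1 = ((2*ν - 1 + 2*K) + 1) + 1 by ring,
       Real.Gamma_add_one (by linarith : (2*ν - 1 + 2*K) + 1 ≠ 0),
       Real.Gamma_add_one (ne_of_gt h2ν12K),
       show ν + K + 1 = (ν + K) + 1 by ring,
       Real.Gamma_add_one (ne_of_gt hνK),
       show ν + ν + K + 1 = ((2*ν - 1 + K) + 1) + 1 by ring,
       Real.Gamma_add_one (by linarith : (2*ν - 1 + K) + 1 ≠ 0),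
       Real.Gamma_add_one (ne_of_gt h2ν1K)]
    rw [hD]; field_simp; ring
  have E4 : sbW ν k = K * D := by
    cases k with
    | zero => simp [sbW, hK, hD]
    | succ m =>
        show bW ν ν m = K * D
        have hKpos : (0:ℝ) < K := by rw [hK]; exact_mod_cast Nat.succ_pos m
        have hm : (m:ℝ) = K - 1 := by rw [hK]; push_cast; ring
        have hfac : (((m+1).factorial : ℕ) : ℝ) = K * m.factorial := by
          rw [hK]; push_cast [Nat.factorial_succ]; ring
        have hmf : (0:ℝ) < (m.factorial : ℝ) := by exact_mod_cast m.factorial_pos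
        unfold bW
        rw [hm]
        rw [show ν + ν + 2*(K-1) + 1 = 2*ν - 1 + 2*K by ring,
           show ν + (K-1) + 1 = ν + K by ring,
           show ν + ν + (K-1) + 1 = (2*ν - 1 + K) + 1 by ring,
           Real.Gamma_add_one (ne_of_gt h2ν1K)]
        rw [hD, hfac]
        field_simp
        ring
  constructor
  · have s1 : (2*ν - 1) * ((2*ν - 1 + 2*K)/(ν + K)) + 2*K ≤ 2*(2*ν - 1 + K) := by
      rw [← sub_nonneg]
      have : 2*(2*ν - 1 + K) - ((2*ν - 1) * ((2*ν - 1 + 2*K)/(ν + K)) + 2*K)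
          = ((4*ν - 2)*(ν + K) - (2*ν - 1)*(2*ν - 1 + 2*K))/(ν + K) := by
        field_simp; ring
      rw [this]
      apply div_nonneg _ hνK.le
      nlinarith
    calc (2*ν - 1) * bW (ν-1) ν k + 2 * sbW ν k
        = ((2*ν - 1) * ((2*ν - 1 + 2*K)/(ν + K)) + 2*K) * D := by rw [E2, E4]; ring
      _ ≤ (2*(2*ν - 1 + K)) * D := mul_le_mul_of_nonneg_right s1 hDpos.le
      _ = 2 * bW (ν-1) (ν-1) k := by rw [E1]; ring
  · have s2 : 2*(2*ν - 1 + K) ≤ (2*ν - 1) * ((2*ν - 1 + 2*K)/(ν + K)) + 2*K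
        + ν * (2*(2*ν - 1 + 2*K)/((ν + K)*(2*ν + K))) := by
      rw [← sub_nonneg]
      have : (2*ν - 1) * ((2*ν - 1 + 2*K)/(ν + K)) + 2*K
          + ν * (2*(2*ν - 1 + 2*K)/((ν + K)*(2*ν + K))) - 2*(2*ν - 1 + K)
          = ((2*ν - 1)*(2*ν - 1 + 2*K)*(2*ν + K) + 2*ν*(2*ν - 1 + 2*K)
            - (4*ν - 2)*(ν + K)*(2*ν + K))/((ν + K)*(2*ν + K)) := by
        field_simp; ring
      rw [this]
      apply div_nonneg _ (by positivity)
      nlinarith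
    calc 2 * bW (ν-1) (ν-1) k = (2*(2*ν - 1 + K)) * D := by rw [E1]; ring
      _ ≤ ((2*ν - 1) * ((2*ν - 1 + 2*K)/(ν + K)) + 2*K
            + ν * (2*(2*ν - 1 + 2*K)/((ν + K)*(2*ν + K)))) * D := by
          exact mul_le_mul_of_nonneg_right s2 hDpos.le
      _ = (2*ν - 1) * bW (ν-1) ν k + 2 * sbW ν k + ν * bW ν ν k := by
          rw [E2, E3, E4]; ring

noncomputable def bS (v t : ℝ) : ℝ := ∑' q : ℕ, bc v q * t ^ q

lemma bc_succ (v : ℝ) (hv : 0 ≤ v) (q : ℕ) :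
    bc v (q+1) = bc v q / (((q:ℝ)+1)*((q:ℝ)+v+1)) := by
  unfold bc
  rw [show ((q+1:ℕ):ℝ) + v + 1 = ((q:ℝ)+v+1)+1 by push_cast; ring,
     Real.Gamma_add_one (by positivity)]
  have hΓ : (0:ℝ) < Real.Gamma ((q:ℝ)+v+1) := Real.Gamma_pos_of_pos (by positivity)
  have hq : (0:ℝ) < q.factorial := by exact_mod_cast q.factorial_pos
  push_cast [Nat.factorial_succ]
  field_simp

lemma summable_bc (v : ℝ) (hv : 0 ≤ v) (t : ℝ) (ht : 0 ≤ t) :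
    Summable (fun q => bc v q * t ^ q) := by
  apply summable_of_ratio_norm_eventually_le (r := 1/2) (by norm_num)
  filter_upwards [Filter.eventually_ge_atTop ⌈2*t⌉₊] with q hq
  have hqt : 2*t ≤ (q:ℝ) := le_trans (Nat.le_ceil _) (by exact_mod_cast hq)
  have hb := bc_pos hv q
  have hb1 := bc_pos hv (q+1)
  have htq : (0:ℝ) ≤ t ^ q := by positivity
  rw [Real.norm_of_nonneg (by positivity), Real.norm_of_nonneg (by positivity)]
  rw [bc_succ v hv q, pow_succ]
  have hq0 : (0:ℝ) ≤ (q:ℝ) := Nat.cast_nonneg q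
  have h1 : (1:ℝ) ≤ ((q:ℝ)+v+1) := by linarith
  have key : bc v q / (((q:ℝ)+1)*((q:ℝ)+v+1)) * t ≤ bc v q * (1/2) := by
    rw [div_mul_eq_mul_div, div_le_iff₀ (by positivity)]
    have h2 : t ≤ (1/2) * (((q:ℝ)+1)*((q:ℝ)+v+1)) := by
      nlinarith [mul_nonneg (by linarith : (0:ℝ) ≤ (q:ℝ)+1) (by linarith : (0:ℝ) ≤ (q:ℝ)+v)]
    have h3 := mul_le_mul_of_nonneg_left h2 hb.le
    nlinarith
  calc bc v q / (((q:ℝ)+1)*((q:ℝ)+v+1)) * (t^q * t)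
      = (bc v q / (((q:ℝ)+1)*((q:ℝ)+v+1)) * t) * t^q := by ring
    _ ≤ (bc v q * (1/2)) * t^q := mul_le_mul_of_nonneg_right key htq
    _ = 1/2 * (bc v q * t^q) := by ring

lemma summable_norm_bc (v : ℝ) (hv : 0 ≤ v) (t : ℝ) (ht : 0 ≤ t) :
    Summable (fun q => ‖bc v q * t ^ q‖) := by
  have := summable_bc v hv t ht
  refine this.congr fun q => ?_
  rw [Real.norm_of_nonneg (mul_nonneg (bc_pos hv q).le (pow_nonneg ht q))]

lemma inner_sum_eq {a b : ℝ} (ha : 0 ≤ a) (hb : 0 ≤ b) (t : ℝ) (n : ℕ) :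
    ∑ i ∈ range (n+1), (bc a i * t ^ i) * (bc b (n-i) * t ^ (n-i)) = bW a b n * t ^ n := by
  rw [← vand ha hb n, Finset.sum_mul]
  refine Finset.sum_congr rfl fun i hi => ?_
  have hin : i ≤ n := by have := Finset.mem_range.mp hi; omega
  have : t ^ i * t ^ (n-i) = t ^ n := by
    rw [← pow_add]; congr 1; omega
  calc (bc a i * t ^ i) * (bc b (n-i) * t ^ (n-i)) = bc a i * bc b (n-i) * (t^i * t^(n-i)) := by
        ring
    _ = bc a i * bc b (n-i) * t^n := by rw [this]

lemma bS_mul {a b : ℝ} (ha : 0 ≤ a) (hb : 0 ≤ b) {t : ℝ} (ht : 0 ≤ t) :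
    bS a t * bS b t = ∑' n : ℕ, bW a b n * t ^ n := by
  unfold bS
  rw [tsum_mul_tsum_eq_tsum_sum_range_of_summable_norm (summable_norm_bc a ha t ht)
    (summable_norm_bc b hb t ht)]
  exact tsum_congr fun n => inner_sum_eq ha hb t n

lemma summable_bW {a b : ℝ} (ha : 0 ≤ a) (hb : 0 ≤ b) {t : ℝ} (ht : 0 ≤ t) :
    Summable (fun n => bW a b n * t ^ n) := by
  have h := summable_norm_sum_mul_range_of_summable_norm (summable_norm_bc a ha t ht)
    (summable_norm_bc b hb t ht)
  have h2 := h.of_norm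
  exact h2.congr fun n => inner_sum_eq ha hb t n

lemma bS_pos (v : ℝ) (hv : 0 ≤ v) {t : ℝ} (ht : 0 ≤ t) : 0 < bS v t := by
  unfold bS
  apply Summable.tsum_pos (summable_bc v hv t ht) (fun q => mul_nonneg (bc_pos hv q).le (pow_nonneg ht q)) 0
  have := bc_pos hv 0
  simpa using this

lemma summable_sbW {ν : ℝ} (hν : 1 ≤ ν) {t : ℝ} (ht : 0 ≤ t) :
    Summable (fun n => sbW ν n * t ^ n) := by
  have hν0 : (0:ℝ) ≤ ν := by linarith
  have h1 : Summable (fun n => sbW ν (n+1) * t ^ (n+1)) := by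
    have := (summable_bW hν0 hν0 ht).mul_left t
    refine this.congr fun n => ?_
    show t * (bW ν ν n * t ^ n) = sbW ν (n+1) * t ^ (n+1)
    rw [show sbW ν (n+1) = bW ν ν n from rfl, pow_succ]
    ring
  exact (summable_nat_add_iff 1).mp h1

lemma tBB_eq {ν : ℝ} (hν : 1 ≤ ν) {t : ℝ} (ht : 0 ≤ t) :
    t * (bS ν t * bS ν t) = ∑' n : ℕ, sbW ν n * t ^ n := by
  have hν0 : (0:ℝ) ≤ ν := by linarith
  rw [bS_mul hν0 hν0 ht, ← tsum_mul_left, Summable.tsum_eq_zero_add (summable_sbW hν ht)]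
  rw [show sbW ν 0 = 0 from rfl, zero_mul, zero_add]
  exact tsum_congr fun n => by
    rw [show sbW ν (n+1) = bW ν ν n from rfl, pow_succ]; ring

lemma main_ineq {ν : ℝ} (hν : 1 ≤ ν) {t : ℝ} (ht : 0 ≤ t) :
    (2*ν - 1) * (bS (ν-1) t * bS ν t) + 2 * (t * (bS ν t * bS ν t))
        ≤ 2 * (bS (ν-1) t * bS (ν-1) t) ∧
    2 * (bS (ν-1) t * bS (ν-1) t) ≤ (2*ν - 1) * (bS (ν-1) t * bS ν t)
        + 2 * (t * (bS ν t * bS ν t)) + ν * (bS ν t * bS ν t) := by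
  have hν0 : (0:ℝ) ≤ ν := by linarith
  have hν1 : (0:ℝ) ≤ ν - 1 := by linarith
  have hAB : bS (ν-1) t * bS ν t = ∑' n : ℕ, bW (ν-1) ν n * t ^ n := bS_mul hν1 hν0 ht
  have hAA : bS (ν-1) t * bS (ν-1) t = ∑' n : ℕ, bW (ν-1) (ν-1) n * t ^ n :=
    bS_mul hν1 hν1 ht
  have hBB : bS ν t * bS ν t = ∑' n : ℕ, bW ν ν n * t ^ n := bS_mul hν0 hν0 ht
  have htBB := tBB_eq hν ht
  have sAB := summable_bW hν1 hν0 ht (t := t)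
  have sAA := summable_bW hν1 hν1 ht (t := t)
  have sBB := summable_bW hν0 hν0 ht (t := t)
  have ssb := summable_sbW hν ht
  rw [hAB, hAA, htBB, hBB]
  rw [← tsum_mul_left, ← tsum_mul_left, ← tsum_mul_left, ← tsum_mul_left]
  constructor
  · rw [← Summable.tsum_add (sAB.mul_left _) (ssb.mul_left _)]
    apply Summable.tsum_le_tsum _ ((sAB.mul_left _).add (ssb.mul_left _)) (sAA.mul_left _)
    intro n
    have hc := (coeff_ineqs ν hν n).1
    have htn : (0:ℝ) ≤ t ^ n := pow_nonneg ht n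
    calc (2*ν - 1) * (bW (ν-1) ν n * t ^ n) + 2 * (sbW ν n * t ^ n)
        = ((2*ν - 1) * bW (ν-1) ν n + 2 * sbW ν n) * t ^ n := by ring
      _ ≤ (2 * bW (ν-1) (ν-1) n) * t ^ n := mul_le_mul_of_nonneg_right hc htn
      _ = 2 * (bW (ν-1) (ν-1) n * t ^ n) := by ring
  · rw [← Summable.tsum_add (sAB.mul_left _) (ssb.mul_left _),
      ← Summable.tsum_add ((sAB.mul_left _).add (ssb.mul_left _)) (sBB.mul_left _)]
    apply Summable.tsum_le_tsum _ (sAA.mul_left _)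
      (((sAB.mul_left _).add (ssb.mul_left _)).add (sBB.mul_left _))
    intro n
    have hc := (coeff_ineqs ν hν n).2
    have htn : (0:ℝ) ≤ t ^ n := pow_nonneg ht n
    calc 2 * (bW (ν-1) (ν-1) n * t ^ n) = (2 * bW (ν-1) (ν-1) n) * t ^ n := by ring
      _ ≤ ((2*ν - 1) * bW (ν-1) ν n + 2 * sbW ν n + ν * bW ν ν n) * t ^ n :=
          mul_le_mul_of_nonneg_right hc htn
      _ = (2*ν - 1) * (bW (ν-1) ν n * t ^ n) + 2 * (sbW ν n * t ^ n)
            + ν * (bW ν ν n * t ^ n) := by ring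

lemma sinh_mul_le {s : ℝ} (h0 : 0 ≤ s) (h1 : s ≤ 1) {c : ℝ} (hc : 0 ≤ c) :
    Real.sinh (s * c) ≤ s * Real.sinh c := by
  set f : ℝ → ℝ := fun u => s * Real.sinh u - Real.sinh (s * u) with hf
  have hd : ∀ u : ℝ, HasDerivAt f (s * Real.cosh u - Real.cosh (s*u) * s) u := by
    intro u
    have h2 : HasDerivAt (fun u : ℝ => Real.sinh (s*u)) (Real.cosh (s*u) * s) u := by
      have h3 : HasDerivAt (fun u : ℝ => s*u) s u := by
        simpa using (hasDerivAt_id u).const_mul s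
      exact (Real.hasDerivAt_sinh (s*u)).comp u h3
    exact ((Real.hasDerivAt_sinh u).const_mul s).sub h2
  have hmono : MonotoneOn f (Set.Ici 0) := by
    apply monotoneOn_of_deriv_nonneg (convex_Ici 0)
    · exact ((continuous_const.mul Real.continuous_sinh).sub
        (Real.continuous_sinh.comp (continuous_const.mul continuous_id))).continuousOn
    · intro u _
      exact (hd u).differentiableAt.differentiableWithinAt
    · intro u _
      rw [(hd u).deriv]
      have habs : |s*u| ≤ |u| := by
        rw [abs_mul]
        have hs : |s| ≤ 1 := abs_le.mpr ⟨by linarith, h1⟩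
        nlinarith [abs_nonneg u]
      have hcc := Real.cosh_le_cosh.mpr habs
      nlinarith [mul_nonneg h0 (sub_nonneg.mpr hcc)]
  have h00 : f 0 ≤ f c := hmono (Set.mem_Ici.mpr le_rfl) (Set.mem_Ici.mpr hc) hc
  have hf0 : f 0 = 0 := by simp [hf]
  rw [hf0] at h00
  simp only [hf] at h00
  linarith

lemma sinh_log_sqrt2 : Real.sinh (Real.log (1 + Real.sqrt 2)) = 1 := by
  have h2 : Real.sqrt 2 ^ 2 = 2 := Real.sq_sqrt (by norm_num)
  have h2n : (0:ℝ) ≤ Real.sqrt 2 := Real.sqrt_nonneg 2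
  have hpos : (0:ℝ) < 1 + Real.sqrt 2 := by positivity
  rw [Real.sinh_eq, Real.exp_neg, Real.exp_log hpos]
  have hinv : (1 + Real.sqrt 2)⁻¹ = Real.sqrt 2 - 1 := by
    rw [inv_eq_iff_eq_inv, eq_comm, inv_eq_iff_eq_inv]
    · field_simp
      nlinarith [h2]
  rw [hinv]; ring

lemma besselI_eq {v κ : ℝ} (hκ : 0 < κ) :
    besselI v κ = (κ/2) ^ v * bS v ((κ/2)^2) := by
  unfold besselI bS
  rw [← tsum_mul_left]
  refine tsum_congr fun q => ?_
  have h2 : (0:ℝ) < κ/2 := by linarith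
  have ha : (κ/2) ^ ((2*(q:ℝ)) + v) = (κ/2)^(2*(q:ℝ)) * (κ/2)^v := Real.rpow_add h2 _ _
  have h3 : (κ/2) ^ (2*(q:ℝ)) = ((κ/2)^2)^q := by
    rw [show (2*(q:ℝ)) = ((2*q : ℕ) : ℝ) by push_cast; ring, Real.rpow_natCast, pow_mul]
  rw [ha, h3]
  simp only [bc]
  ring

lemma quad_aux {ν u E : ℝ} (hν : 1 ≤ ν) (hu : ν ≤ u) (hE : u^2 + ν*u + ν^2/2 ≤ u^2*E) :
    2*ν + u^2 + (2*ν - 1)*u*E ≤ u^2*E^2 := by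
  have hu0 : (0:ℝ) < u := by linarith
  have h1 : 0 ≤ (u^2*E - (u^2+ν*u+ν^2/2)) * ((u^2*E + (u^2+ν*u+ν^2/2)) - (2*ν-1)*u) := by
    apply mul_nonneg (by linarith)
    nlinarith [sq_nonneg u, sq_nonneg ν]
  have h2 : 0 ≤ u^2*(u-ν) + ν^2*u/2 + ν^4/4 := by
    have p1 : 0 ≤ u^2*(u-ν) := mul_nonneg (sq_nonneg u) (by linarith)
    have p2 : 0 ≤ ν^2*u/2 := by positivity
    have p3 : 0 ≤ ν^4/4 := by positivity
    linarith
  have key : u^2*(u^2*E^2 - (2*ν + u^2 + (2*ν-1)*u*E))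
      = (u^2*E - (u^2+ν*u+ν^2/2)) * ((u^2*E + (u^2+ν*u+ν^2/2)) - (2*ν-1)*u)
        + (u^2*(u-ν) + ν^2*u/2 + ν^4/4) := by ring
  have h5 : u^2 * 0 ≤ u^2 * (u^2*E^2 - (2*ν + u^2 + (2*ν-1)*u*E)) := by
    rw [key]; simpa using add_nonneg h1 h2
  have h6 := le_of_mul_le_mul_left h5 (by positivity : (0:ℝ) < u^2)
  linarith

lemma quad_mono {c1 c2 c3 x y : ℝ} (hc1 : 0 < c1) (hc2 : 0 ≤ c2) (hx : 0 < x) (hy : 0 < y)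
    (hqx : c1*x^2 + c2*x - c3 ≤ 0) (hqy : 0 ≤ c1*y^2 + c2*y - c3) : x ≤ y := by
  by_contra hlt
  push_neg at hlt
  have hbr : 0 < c1*(x+y) + c2 := by nlinarith
  nlinarith [mul_pos (sub_pos.mpr hlt) hbr]

set_option maxHeartbeats 1000000 in
theorem stmt_6 (p : ℕ) (hp : 2 ≤ p) (κ : ℝ) (hκ : (p : ℝ) / 2 ≤ κ) :
    Real.exp (-(p : ℝ) / (2 * κ)) ≤ Ap p κ ∧
      Ap p κ ≤ Real.exp (-(-Real.log (Real.sqrt 2 - 1)) * ((p : ℝ) - 1) / (2 * κ)) := by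
  have hp2 : (2:ℝ) ≤ (p:ℝ) := by exact_mod_cast hp
  set ν : ℝ := (p:ℝ)/2 with hν_def
  have hν : 1 ≤ ν := by rw [hν_def]; linarith
  have hx : ν ≤ κ := hκ
  have hκpos : 0 < κ := lt_of_lt_of_le (by linarith) hx
  set h : ℝ := κ/2 with hh_def
  have hh : 0 < h := by rw [hh_def]; linarith
  set t : ℝ := h^2 with ht_def
  have ht : 0 ≤ t := by rw [ht_def]; positivity
  set A := bS (ν-1) t with hA_def
  set B := bS ν t with hB_def
  have hA : 0 < A := bS_pos _ (by linarith) ht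
  have hB : 0 < B := bS_pos _ (by linarith) ht
  have hAp : Ap p κ = h * B / A := by
    unfold Ap
    rw [besselI_eq hκpos, besselI_eq hκpos, ← hν_def, ← hh_def, ← ht_def,
      ← hA_def, ← hB_def]
    have hne : h ^ (ν-1:ℝ) ≠ 0 := ne_of_gt (Real.rpow_pos_of_pos hh _)
    have hrw : h ^ (ν:ℝ) = h ^ (ν-1:ℝ) * h := by
      rw [← Real.rpow_add_one (ne_of_gt hh) (ν-1)]; norm_num
    rw [hrw]
    field_simp
  set ρ : ℝ := h * B / A with hρ_def
  have hρpos : 0 < ρ := by rw [hρ_def]; positivity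
  have hAρ : A * ρ = h * B := by rw [hρ_def]; field_simp
  obtain ⟨hK1, hK2⟩ := main_ineq hν ht
  rw [← hA_def, ← hB_def] at hK1 hK2
  clear_value A B
  clear_value ρ
  clear_value t
  clear_value h
  clear_value ν
  have hq2 : 2*h^2*ρ^2 + (2*ν-1)*h*ρ - 2*h^2 ≤ 0 := by
    have hid : A^2*(2*h^2*ρ^2 + (2*ν-1)*h*ρ - 2*h^2)
        = h^2*((2*ν-1)*(A*B) + 2*(t*(B*B)) - 2*(A*A)) := by
      rw [ht_def]
      linear_combination (2*h^2*(A*ρ + h*B) + (2*ν-1)*h*A) * hAρ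
    have hr : h^2*((2*ν-1)*(A*B) + 2*(t*(B*B)) - 2*(A*A)) ≤ 0 :=
      mul_nonpos_of_nonneg_of_nonpos (sq_nonneg h) (by linarith)
    have hle : A^2*(2*h^2*ρ^2 + (2*ν-1)*h*ρ - 2*h^2) ≤ A^2 * 0 := by
      rw [hid]; simpa using hr
    exact le_of_mul_le_mul_left hle (pow_pos hA 2)
  have hq1 : 0 ≤ (ν+2*h^2)*ρ^2 + (2*ν-1)*h*ρ - 2*h^2 := by
    have hid : A^2*((ν+2*h^2)*ρ^2 + (2*ν-1)*h*ρ - 2*h^2)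
        = h^2*((2*ν-1)*(A*B) + 2*(t*(B*B)) + ν*(B*B) - 2*(A*A)) := by
      rw [ht_def]
      linear_combination ((ν+2*h^2)*(A*ρ + h*B) + (2*ν-1)*h*A) * hAρ
    have hr : 0 ≤ h^2*((2*ν-1)*(A*B) + 2*(t*(B*B)) + ν*(B*B) - 2*(A*A)) :=
      mul_nonneg (sq_nonneg h) (by linarith)
    have hle : A^2 * 0 ≤ A^2*((ν+2*h^2)*ρ^2 + (2*ν-1)*h*ρ - 2*h^2) := by
      rw [hid]; simpa using hr
    exact le_of_mul_le_mul_left hle (pow_pos hA 2)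
  constructor
  · -- lower bound
    have hgoal : -(p:ℝ)/(2*κ) = -(ν/κ) := by rw [hν_def]; ring
    rw [hgoal, hAp]
    set e := Real.exp (-(ν/κ)) with he_def
    set E := Real.exp (ν/κ) with hE_def
    have hepos : 0 < e := Real.exp_pos _
    have hEpos : 0 < E := Real.exp_pos _
    have heE : e * E = 1 := by
      rw [he_def, hE_def, ← Real.exp_add]; simp
    clear_value e E
    have hEq2 : κ^2 + ν*κ + ν^2/2 ≤ κ^2*E := by
      have hq := Real.quadratic_le_exp_of_nonneg (x := ν/κ) (by positivity)
      rw [← hE_def] at hq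
      have h7 := mul_le_mul_of_nonneg_left hq (sq_nonneg κ)
      have h8 : κ^2*(1 + ν/κ + (ν/κ)^2/2) = κ^2 + ν*κ + ν^2/2 := by
        field_simp
      rw [h8] at h7
      exact h7
    have hEq := quad_aux hν hx hEq2
    have hqe : (ν+2*h^2)*e^2 + (2*ν-1)*h*e - 2*h^2 ≤ 0 := by
      have hid2 : ((ν+2*h^2)*e^2 + (2*ν-1)*h*e - 2*h^2)*E^2
          = (ν+2*h^2) + (2*ν-1)*h*E - 2*h^2*E^2 := by
        linear_combination ((ν+2*h^2)*(e*E+1) + (2*ν-1)*h*E) * heE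
      have hh2 : (ν+2*h^2) + (2*ν-1)*h*E - 2*h^2*E^2 ≤ 0 := by
        rw [hh_def]
        nlinarith [hEq]
      have hle : ((ν+2*h^2)*e^2 + (2*ν-1)*h*e - 2*h^2)*E^2 ≤ 0 * E^2 := by
        rw [hid2]; simpa using hh2
      exact le_of_mul_le_mul_right hle (pow_pos hEpos 2)
    exact quad_mono (by linarith [sq_nonneg h] : (0:ℝ) < ν+2*h^2)
      (mul_nonneg (by linarith) hh.le) hepos hρpos hqe hq1
  · -- upper bound
    set L := Real.log (1 + Real.sqrt 2) with hL_def
    have h2 : Real.sqrt 2 ^ 2 = 2 := Real.sq_sqrt (by norm_num)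
    have h2n : (0:ℝ) ≤ Real.sqrt 2 := Real.sqrt_nonneg 2
    have hL0 : 0 ≤ L := by rw [hL_def]; exact Real.log_nonneg (by nlinarith)
    have hα : -Real.log (Real.sqrt 2 - 1) = L := by
      have hm : (Real.sqrt 2 - 1) * (1 + Real.sqrt 2) = 1 := by nlinarith
      have hinv : Real.sqrt 2 - 1 = (1 + Real.sqrt 2)⁻¹ := eq_inv_of_mul_eq_one_left hm
      rw [hinv, Real.log_inv, hL_def]; ring
    set s : ℝ := (2*ν-1)/(2*κ) with hs_def
    have hs0 : 0 ≤ s := by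
      rw [hs_def]; apply div_nonneg (by linarith) (by linarith)
    have hs1 : s ≤ 1 := by
      rw [hs_def, div_le_one (by linarith)]; linarith
    have hgoal : -(-Real.log (Real.sqrt 2 - 1)) * ((p:ℝ) - 1) / (2*κ) = -(s*L) := by
      rw [hα, hs_def, hν_def]
      field_simp
    rw [hgoal, hAp]
    set e' := Real.exp (-(s*L)) with he'_def
    set E' := Real.exp (s*L) with hE'_def
    have he'pos : 0 < e' := Real.exp_pos _
    have hE'pos : 0 < E' := Real.exp_pos _
    have hprod : e' * E' = 1 := by rw [he'_def, hE'_def, ← Real.exp_add]; simp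
    have hsL : Real.sinh L = 1 := by rw [hL_def]; exact sinh_log_sqrt2
    have hsinh := sinh_mul_le hs0 hs1 hL0
    rw [hsL, mul_one] at hsinh
    have h9 : Real.sinh (s*L) = (E' - e')/2 := by
      rw [Real.sinh_eq, ← hE'_def, ← he'_def]
    rw [h9] at hsinh
    have hcoef : (2*ν-1)*h = 4*s*h^2 := by
      rw [hs_def, hh_def]
      field_simp
      ring
    have hq2e : 0 ≤ 2*h^2*e'^2 + (2*ν-1)*h*e' - 2*h^2 := by
      have hid3 : 2*h^2*e'^2 + (2*ν-1)*h*e' - 2*h^2 = 2*h^2*e'*(e' + 2*s - E') := by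
        linear_combination e' * hcoef + 2*h^2 * hprod
      rw [hid3]
      exact mul_nonneg (by positivity) (by linarith)
    exact quad_mono (by positivity : (0:ℝ) < 2*h^2)
      (mul_nonneg (by linarith) hh.le) hρpos he'pos hq2 hq2e
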